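/- Lunar power formula for numbers with weakly decreasing digits: let B ≥ 2 and let a be a natural number with base-B digits a_k, ..., a_1, a_0 (from most significant to least significant) satisfying a_{i+1} ≤ a_i for all i. Then for every n ≥ 1, the n-th lunar power of a (the n-fold lunar product a ⊗ a ⊗ ... ⊗ a) is the number whose base-B digit sequence, from most significant to least significant, consists of a_k repeated n times, then a_{k-1} repeated n times, ..., then a_1 repeated n times, then a_0 once. -/

import Mathlib

/-- The `d`-th base-`B` digit of `n` (position 0 is the least significant digit). -/
def lunarDigit (B n d : ℕ) : ℕ := n / B ^ d % B

/-- Base-`B` lunar addition: the `d`-th digit of `x ⊕ y` is the maximum of the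
`d`-th digits of `x` and `y` (no carries). -/
def lunarAdd (B x y : ℕ) : ℕ :=
  ∑ d ∈ Finset.range (x + y + 1), max (lunarDigit B x d) (lunarDigit B y d) * B ^ d

/-- Base-`B` lunar multiplication: the `d`-th digit of `x ⊗ y` is the maximum over
`j + k = d` of the minimum of the `j`-th digit of `x` and the `k`-th digit of `y`. -/
def lunarMul (B x y : ℕ) : ℕ :=
  ∑ d ∈ Finset.range (x + y + 1),
    ((Finset.range (d + 1)).sup fun j => min (lunarDigit B x j) (lunarDigit B y (d - j))) * B ^ d

/-- `M` is a 3×3 base-`B` lunar magic square with total `T`: the lunar sums of the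
three rows, the three columns, and the two diagonals all equal `T`. -/
def IsLunarMagic (B : ℕ) (M : Fin 3 → Fin 3 → ℕ) (T : ℕ) : Prop :=
  (∀ i, lunarAdd B (lunarAdd B (M i 0) (M i 1)) (M i 2) = T) ∧
  (∀ j, lunarAdd B (lunarAdd B (M 0 j) (M 1 j)) (M 2 j) = T) ∧
  lunarAdd B (lunarAdd B (M 0 0) (M 1 1)) (M 2 2) = T ∧
  lunarAdd B (lunarAdd B (M 0 2) (M 1 1)) (M 2 0) = T

/-- The nine entries of `M` are pairwise distinct. -/
def DistinctEntries (M : Fin 3 → Fin 3 → ℕ) : Prop :=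
  ∀ i j i' j', M i j = M i' j' → i = i' ∧ j = j'

/-- The `n`-th base-`B` lunar power of `a` (so `lunarPow B a 1 = a`, and
`lunarPow B a 0` is the lunar multiplicative identity `B - 1`). -/
def lunarPow (B a : ℕ) : ℕ → ℕ
  | 0 => B - 1
  | 1 => a
  | n + 2 => lunarMul B a (lunarPow B a (n + 1))

lemma lunarDigit_lt (B n d : ℕ) (hB : 2 ≤ B) : lunarDigit B n d < B :=
  Nat.mod_lt _ (by omega)

lemma lunarDigit_eq_zero (B n d : ℕ) (hB : 2 ≤ B) (h : n ≤ d) : lunarDigit B n d = 0 := by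
  unfold lunarDigit
  rw [Nat.div_eq_of_lt, Nat.zero_mod]
  calc n ≤ d := h
    _ < 2 ^ d := Nat.lt_two_pow_self (n := d)
    _ ≤ B ^ d := Nat.pow_le_pow_left hB d

lemma lunarDigit_sum (B : ℕ) (hB : 2 ≤ B) :
    ∀ (m N : ℕ) (f : ℕ → ℕ), (∀ d, f d < B) →
      lunarDigit B (∑ d ∈ Finset.range N, f d * B ^ d) m = if m < N then f m else 0 := by
  intro m
  induction m with
  | zero =>
    intro N f hf
    cases N with
    | zero => simp [lunarDigit]
    | succ N' =>
      rw [Finset.sum_range_succ']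
      simp only [pow_zero, mul_one, pow_succ]
      unfold lunarDigit
      simp only [pow_zero, Nat.div_one]
      have h1 : ∑ i ∈ Finset.range N', f (i+1) * (B ^ i * B) = (∑ i ∈ Finset.range N', f (i+1) * B ^ i) * B := by
        rw [Finset.sum_mul]; congr 1; ext i; ring
      rw [h1, Nat.add_comm, Nat.add_mul_mod_self_right, Nat.mod_eq_of_lt (hf 0)]
      simp
  | succ m ih =>
    intro N f hf
    have hstep : ∀ S, lunarDigit B S (m+1) = lunarDigit B (S / B) m := by
      intro S
      unfold lunarDigit
      rw [pow_succ, Nat.mul_comm, ← Nat.div_div_eq_div_mul]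
    cases N with
    | zero => simp [hstep, lunarDigit]
    | succ N' =>
      rw [hstep, Finset.sum_range_succ']
      simp only [pow_zero, mul_one, pow_succ]
      have h1 : ∑ i ∈ Finset.range N', f (i+1) * (B ^ i * B) = (∑ i ∈ Finset.range N', f (i+1) * B ^ i) * B := by
        rw [Finset.sum_mul]; congr 1; ext i; ring
      rw [h1, Nat.add_comm, Nat.add_mul_div_right _ _ (by omega : 0 < B), Nat.div_eq_of_lt (hf 0), Nat.zero_add]
      rw [ih N' (fun i => f (i+1)) (fun i => hf (i+1))]
      simp [Nat.succ_lt_succ_iff]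

lemma lunarDigit_mul (B x y : ℕ) (hB : 2 ≤ B) (m : ℕ) :
    lunarDigit B (lunarMul B x y) m =
      (Finset.range (m+1)).sup fun j => min (lunarDigit B x j) (lunarDigit B y (m - j)) := by
  unfold lunarMul
  rw [lunarDigit_sum B hB]
  · split_ifs with h
    · rfl
    · symm
      refine Nat.le_zero.1 (Finset.sup_le fun j hj => ?_)
      push_neg at h
      rcases le_or_gt x j with hx | hx
      · simp [lunarDigit_eq_zero B x j hB hx]
      · have : y ≤ m - j := by omega
        simp [lunarDigit_eq_zero B y (m-j) hB this]
  · intro d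
    rw [Finset.sup_lt_iff (show (⊥:ℕ) < B by rw [Nat.bot_eq_zero]; omega)]
    intro j hj
    exact lt_of_le_of_lt (min_le_left _ _) (lunarDigit_lt B x j hB)

lemma lunar_arith (k m : ℕ) (q : ℕ) (hq : q = (m + k + 1) / (k + 2)) :
    q ≤ m ∧ (m - q + k) / (k + 1) ≤ q ∧ ∀ j, j < q → q ≤ (m - j + k) / (k + 1) := by
  have hk2 : 0 < k + 2 := by omega
  have hdm := Nat.div_add_mod (m + k + 1) (k + 2)
  have hmod := Nat.mod_lt (m + k + 1) hk2
  rw [← hq] at hdm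
  have hqm : q ≤ m := by
    rw [hq, Nat.lt_succ_iff.symm, Nat.div_lt_iff_lt_mul hk2]
    nlinarith
  refine ⟨hqm, ?_, ?_⟩
  · rw [Nat.lt_succ_iff.symm, Nat.div_lt_iff_lt_mul (by omega : 0 < k + 1)]
    simp only [Nat.succ_eq_add_one]
    have key2 : m ≤ (k + 2) * q := by linarith [hdm, hmod]
    have h3 : m - q ≤ (k + 1) * q := by
      rw [Nat.sub_le_iff_le_add]
      calc m ≤ (k + 2) * q := key2
        _ = (k + 1) * q + q := by ring
    have hexp : (q + 1) * (k + 1) = (k + 1) * q + k + 1 := by ring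
    omega
  · intro j hj
    rw [Nat.le_div_iff_mul_le (by omega : 0 < k + 1)]
    have hX : (k + 2) * q ≤ m + k + 1 := by omega
    have hexp : q * (k + 1) + q = (k + 2) * q := by ring
    have h5 : m + k + 1 ≤ m - j + k + q := by omega
    omega

theorem stmt_12 (B a n : ℕ) (hB : 2 ≤ B) (hn : 1 ≤ n)
    (ha : ∀ i, lunarDigit B a (i + 1) ≤ lunarDigit B a i) :
    ∀ m, lunarDigit B (lunarPow B a n) m = lunarDigit B a ((m + n - 1) / n) := by
  have hA : Antitone (lunarDigit B a) := antitone_nat_of_succ_le ha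
  induction n, hn using Nat.le_induction with
  | base => intro m; simp [lunarPow]
  | succ n hn' ih =>
    intro m
    obtain ⟨k, rfl⟩ : ∃ k, n = k + 1 := ⟨n - 1, by omega⟩
    have hpow : lunarPow B a (k + 1 + 1) = lunarMul B a (lunarPow B a (k + 1)) := rfl
    rw [hpow, lunarDigit_mul B _ _ hB]
    set q := (m + (k + 1 + 1) - 1) / (k + 1 + 1) with hqdef
    have hq : q = (m + k + 1) / (k + 2) := by
      rw [hqdef]; congr 1 <;> omega
    obtain ⟨hqm, hc, hlow⟩ := lunar_arith k m q hq
    have key : ∀ j, min (lunarDigit B a j) (lunarDigit B (lunarPow B a (k+1)) (m - j))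
        = lunarDigit B a (max j ((m - j + k) / (k + 1))) := by
      intro j
      rw [ih (m - j)]
      have he : (m - j + (k + 1) - 1) = m - j + k := by omega
      rw [he]
      rcases le_total j ((m - j + k) / (k + 1)) with h | h
      · rw [max_eq_right h, min_eq_right (hA h)]
      · rw [max_eq_left h, min_eq_left (hA h)]
    rw [Finset.sup_congr rfl (fun j _ => key j)]
    apply le_antisymm
    · refine Finset.sup_le fun j hj => hA ?_
      rcases le_or_gt q j with h | h
      · exact le_max_of_le_left h
      · exact le_max_of_le_right (hlow j h)
    · have hmem : q ∈ Finset.range (m + 1) := Finset.mem_range.2 (by omega)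
      calc lunarDigit B a q = lunarDigit B a (max q ((m - q + k) / (k + 1))) := by
              rw [max_eq_left hc]
        _ ≤ _ := Finset.le_sup (f := fun j => lunarDigit B a (max j ((m - j + k) / (k + 1)))) hmem
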